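/- Let K ⊂ ℝ^d be compact with positive Lebesgue measure, p_1,...,p_k probability densities on K bounded above and below away from 0 on K, and ν a probability measure supported on K with bounded density q. Then the function F(λ) = E_ν[log q(X) − ∑_{i=1}^k λ_i log p_i(X)] + log(∫_K ∏_{i=1}^k p_i(y)^{λ_i} dy) is convex in λ on the simplex Δ_k. -/

import Mathlib

open MeasureTheory
open scoped ENNReal

section Aux

variable {d k : ℕ}

/-- Convexity of the log-partition term `λ ↦ log ∫_K ∏ᵢ pᵢ^{λᵢ}`. -/
lemma aux_logPartition_convexOn (K : Set (EuclideanSpace ℝ (Fin d)))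
    (hKm : MeasurableSet K) (hKfin : volume K < ⊤) (hKpos : 0 < volume K)
    (p : Fin k → EuclideanSpace ℝ (Fin d) → ℝ)
    (c C : ℝ) (hc : 0 < c)
    (hp_bounds : ∀ i, ∀ x ∈ K, c ≤ p i x ∧ p i x ≤ C)
    (hpm : ∀ i, AEStronglyMeasurable (p i) (volume.restrict K)) :
    ConvexOn ℝ (stdSimplex ℝ (Fin k))
      (fun lam => Real.log (∫ y in K, ∏ i, p i y ^ lam i)) := by
  set m0 : ℝ := min c 1 with hm0def
  set M0 : ℝ := max C 1 with hM0def
  have hm0 : 0 < m0 := lt_min hc one_pos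
  have hM0 : 0 < M0 := lt_of_lt_of_le one_pos (le_max_right _ _)
  -- pointwise bounds on the product
  have hbound : ∀ lam ∈ stdSimplex ℝ (Fin k), ∀ y ∈ K,
      m0 ≤ ∏ i, p i y ^ lam i ∧ (∏ i, p i y ^ lam i) ≤ M0 := by
    intro lam hlam y hy
    constructor
    · calc m0 = m0 ^ (∑ i, lam i) := by rw [hlam.2, Real.rpow_one]
        _ = ∏ i, m0 ^ lam i := Real.rpow_sum_of_pos hm0 _ _
        _ ≤ ∏ i, p i y ^ lam i := by
            refine Finset.prod_le_prod (fun i _ => Real.rpow_nonneg hm0.le _) ?_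
            intro i _
            exact Real.rpow_le_rpow hm0.le
              (le_trans (min_le_left _ _) (hp_bounds i y hy).1) (hlam.1 i)
    · calc (∏ i, p i y ^ lam i) ≤ ∏ i, M0 ^ lam i := by
            refine Finset.prod_le_prod
              (fun i _ => Real.rpow_nonneg (le_trans hc.le (hp_bounds i y hy).1) _) ?_
            intro i _
            exact Real.rpow_le_rpow (le_trans hc.le (hp_bounds i y hy).1)
              (le_trans (hp_bounds i y hy).2 (le_max_left _ _)) (hlam.1 i)
        _ = M0 ^ (∑ i, lam i) := (Real.rpow_sum_of_pos hM0 _ _).symm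
        _ = M0 := by rw [hlam.2, Real.rpow_one]
  -- measurability
  have hprodm : ∀ lam : Fin k → ℝ,
      AEMeasurable (fun y => ∏ i, p i y ^ lam i) (volume.restrict K) := by
    intro lam
    exact Finset.aemeasurable_fun_prod _ fun i _ =>
      (hpm i).aemeasurable.pow_const (lam i)
  set G : (Fin k → ℝ) → ℝ≥0∞ :=
    fun lam => ∫⁻ y in K, ENNReal.ofReal (∏ i, p i y ^ lam i) with hGdef
  have hG_lb : ∀ lam ∈ stdSimplex ℝ (Fin k), ENNReal.ofReal m0 * volume K ≤ G lam := by
    intro lam hlam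
    calc ENNReal.ofReal m0 * volume K = ∫⁻ _ in K, ENNReal.ofReal m0 := by
          rw [setLIntegral_const]
      _ ≤ G lam := by
          refine lintegral_mono_ae ?_
          filter_upwards [ae_restrict_mem hKm] with y hy
          exact ENNReal.ofReal_le_ofReal (hbound lam hlam y hy).1
  have hG_ub : ∀ lam ∈ stdSimplex ℝ (Fin k), G lam ≤ ENNReal.ofReal M0 * volume K := by
    intro lam hlam
    calc G lam ≤ ∫⁻ _ in K, ENNReal.ofReal M0 := by
          refine lintegral_mono_ae ?_
          filter_upwards [ae_restrict_mem hKm] with y hy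
          exact ENNReal.ofReal_le_ofReal (hbound lam hlam y hy).2
      _ = ENNReal.ofReal M0 * volume K := by rw [setLIntegral_const]
  have hG_pos : ∀ lam ∈ stdSimplex ℝ (Fin k), 0 < G lam := fun lam hlam =>
    lt_of_lt_of_le (ENNReal.mul_pos (ENNReal.ofReal_pos.mpr hm0).ne' hKpos.ne')
      (hG_lb lam hlam)
  have hG_fin : ∀ lam ∈ stdSimplex ℝ (Fin k), G lam < ⊤ := fun lam hlam =>
    lt_of_le_of_lt (hG_ub lam hlam) (ENNReal.mul_lt_top ENNReal.ofReal_lt_top hKfin)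
  have hG_toReal_pos : ∀ lam ∈ stdSimplex ℝ (Fin k), 0 < (G lam).toReal := fun lam hlam =>
    ENNReal.toReal_pos (hG_pos lam hlam).ne' (hG_fin lam hlam).ne
  -- relate the Bochner integral to G
  have hInt : ∀ lam : Fin k → ℝ,
      (∫ y in K, ∏ i, p i y ^ lam i) = (G lam).toReal := by
    intro lam
    rw [integral_eq_lintegral_of_nonneg_ae]
    · filter_upwards [ae_restrict_mem hKm] with y hy
      exact Finset.prod_nonneg fun i _ =>
        Real.rpow_nonneg (le_trans hc.le (hp_bounds i y hy).1) _
    · exact (hprodm lam).aestronglyMeasurable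
  refine ⟨convex_stdSimplex ℝ _, ?_⟩
  intro x hx y hy a b ha hb hab
  rcases eq_or_lt_of_le ha with haz | ha
  · have hb1 : b = 1 := by linarith
    simp [← haz, hb1]
  rcases eq_or_lt_of_le hb with hbz | hb
  · have ha1 : a = 1 := by linarith
    simp [← hbz, ha1]
  have hmem : a • x + b • y ∈ stdSimplex ℝ (Fin k) := (convex_stdSimplex ℝ _) hx hy ha.le hb.le hab
  -- Hölder's inequality
  have key : G (a • x + b • y) ≤ G x ^ a * G y ^ b := by
    have hpq : (1/a).HolderConjugate (1/b) := by
      rw [Real.holderConjugate_iff]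
      constructor
      · rw [lt_div_iff₀ ha, one_mul]; linarith
      · rw [one_div, one_div, inv_inv, inv_inv]; exact hab
    have hfm : AEMeasurable
        (fun z => ENNReal.ofReal (∏ i, p i z ^ x i) ^ a) (volume.restrict K) :=
      (ENNReal.measurable_ofReal.comp_aemeasurable (hprodm x)).pow_const a
    have hgm : AEMeasurable
        (fun z => ENNReal.ofReal (∏ i, p i z ^ y i) ^ b) (volume.restrict K) :=
      (ENNReal.measurable_ofReal.comp_aemeasurable (hprodm y)).pow_const b
    have heq : G (a • x + b • y) = ∫⁻ z in K,
        (ENNReal.ofReal (∏ i, p i z ^ x i) ^ a) * (ENNReal.ofReal (∏ i, p i z ^ y i) ^ b) := by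
      refine lintegral_congr_ae ?_
      filter_upwards [ae_restrict_mem hKm] with z hz
      have hppos : ∀ i, (0:ℝ) < p i z := fun i => lt_of_lt_of_le hc (hp_bounds i z hz).1
      have h1 : (∏ i, p i z ^ (a • x + b • y) i)
          = (∏ i, p i z ^ x i) ^ a * (∏ i, p i z ^ y i) ^ b := by
        rw [← Real.finset_prod_rpow _ _ (fun i _ => (Real.rpow_pos_of_pos (hppos i) _).le) a,
          ← Real.finset_prod_rpow _ _ (fun i _ => (Real.rpow_pos_of_pos (hppos i) _).le) b,
          ← Finset.prod_mul_distrib]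
        refine Finset.prod_congr rfl fun i _ => ?_
        have : (a • x + b • y) i = x i * a + y i * b := by
          simp [Pi.smul_apply, smul_eq_mul]; ring
        rw [this, Real.rpow_add (hppos i), Real.rpow_mul (hppos i).le, Real.rpow_mul (hppos i).le]
      rw [h1, ENNReal.ofReal_mul (Real.rpow_nonneg (Finset.prod_nonneg fun i _ =>
          (Real.rpow_pos_of_pos (hppos i) _).le) _),
        ENNReal.ofReal_rpow_of_pos (Finset.prod_pos fun i _ => Real.rpow_pos_of_pos (hppos i) _),
        ENNReal.ofReal_rpow_of_pos (Finset.prod_pos fun i _ => Real.rpow_pos_of_pos (hppos i) _)]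
    have hpow : ∀ (w : ℝ≥0∞) (r : ℝ), 0 < r → (w ^ r) ^ r⁻¹ = w := by
      intro w r hr
      rw [← ENNReal.rpow_mul, mul_inv_cancel₀ hr.ne', ENNReal.rpow_one]
    calc G (a • x + b • y)
        = ∫⁻ z in K, ((fun z => ENNReal.ofReal (∏ i, p i z ^ x i) ^ a) *
            (fun z => ENNReal.ofReal (∏ i, p i z ^ y i) ^ b)) z := heq
      _ ≤ (∫⁻ z in K, (ENNReal.ofReal (∏ i, p i z ^ x i) ^ a) ^ (1/a)) ^ (1/(1/a)) *
          (∫⁻ z in K, (ENNReal.ofReal (∏ i, p i z ^ y i) ^ b) ^ (1/b)) ^ (1/(1/b)) :=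
          ENNReal.lintegral_mul_le_Lp_mul_Lq _ hpq hfm hgm
      _ = G x ^ a * G y ^ b := by
          simp only [one_div, inv_inv, hpow _ a ha, hpow _ b hb]
          rfl
  -- conclude via monotonicity of log
  have hfinx := (hG_fin x hx).ne
  have hfiny := (hG_fin y hy).ne
  have hne : G x ^ a * G y ^ b ≠ ⊤ :=
    ENNReal.mul_ne_top (ENNReal.rpow_ne_top_of_nonneg ha.le hfinx)
      (ENNReal.rpow_ne_top_of_nonneg hb.le hfiny)
  simp only [smul_eq_mul, hInt]
  calc Real.log (G (a • x + b • y)).toReal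
      ≤ Real.log ((G x ^ a * G y ^ b).toReal) :=
        Real.log_le_log (hG_toReal_pos _ hmem) (ENNReal.toReal_mono hne key)
    _ = a * Real.log (G x).toReal + b * Real.log (G y).toReal := by
        rw [ENNReal.toReal_mul, ← ENNReal.toReal_rpow, ← ENNReal.toReal_rpow,
          Real.log_mul (Real.rpow_pos_of_pos (hG_toReal_pos x hx) a).ne'
            (Real.rpow_pos_of_pos (hG_toReal_pos y hy) b).ne',
          Real.log_rpow (hG_toReal_pos x hx), Real.log_rpow (hG_toReal_pos y hy)]

end Aux

/-- Convexity of the vanilla-fusion objective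
`F(λ) = E_ν[log q(X) − ∑ᵢ λᵢ log pᵢ(X)] + log ∫_K ∏ᵢ pᵢ^{λᵢ}`
on the probability simplex (Proposition 4.2). -/
theorem vanillaFusion_objective_convexOn
    {d k : ℕ} (K : Set (EuclideanSpace ℝ (Fin d))) (hK : IsCompact K)
    (hKpos : 0 < volume K)
    (p : Fin k → EuclideanSpace ℝ (Fin d) → ℝ)
    (c C : ℝ) (hc : 0 < c)
    (hp_bounds : ∀ i, ∀ x ∈ K, c ≤ p i x ∧ p i x ≤ C)
    (hp_supp : ∀ i, ∀ x ∉ K, p i x = 0)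
    (hp_prob : ∀ i, ∫ x in K, p i x = 1)
    (ν : Measure (EuclideanSpace ℝ (Fin d))) [IsProbabilityMeasure ν]
    (q : EuclideanSpace ℝ (Fin d) → ℝ) (Cq : ℝ)
    (hq_density : ν = volume.withDensity (fun x => ENNReal.ofReal (q x)))
    (hq_bound : ∀ x, q x ≤ Cq)
    (hq_supp : ∀ x ∉ K, q x = 0) :
    ConvexOn ℝ (stdSimplex ℝ (Fin k))
      (fun lam =>
        (∫ x, (Real.log (q x) - ∑ i, lam i * Real.log (p i x)) ∂ν) +
          Real.log (∫ y in K, ∏ i, p i y ^ lam i)) := by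
  have hKm : MeasurableSet K := hK.measurableSet
  have hνK : ν Kᶜ = 0 := by
    rw [hq_density, withDensity_apply _ hKm.compl]
    have h0 : (fun x => ENNReal.ofReal (q x)) =ᵐ[volume.restrict Kᶜ] 0 := by
      filter_upwards [ae_restrict_mem hKm.compl] with x hx
      simp [hq_supp x hx]
    rw [lintegral_congr_ae h0]; simp
  have hmemK : ∀ᵐ x ∂ν, x ∈ K := by
    rw [ae_iff]
    convert hνK using 2
    rfl
  have hac : ν ≪ volume := by
    rw [hq_density]; exact withDensity_absolutelyContinuous _ _
  have hpint : ∀ i, Integrable (p i) (volume.restrict K) := by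
    intro i; by_contra h
    have := hp_prob i
    rw [integral_undef h] at this
    exact one_ne_zero this.symm
  have hpaem : ∀ i, AEMeasurable (p i) volume := by
    intro i
    rw [← Measure.restrict_add_restrict_compl (μ := volume) hKm]
    refine AEMeasurable.add_measure (hpint i).1.aemeasurable ?_
    have h0 : (p i) =ᵐ[volume.restrict Kᶜ] 0 := by
      filter_upwards [ae_restrict_mem hKm.compl] with x hx
      exact hp_supp i x hx
    exact (aemeasurable_congr h0).mpr aemeasurable_const
  have hlogm : ∀ i, AEStronglyMeasurable (fun x => Real.log (p i x)) ν := fun i =>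
    (Real.measurable_log.comp_aemeasurable ((hpaem i).mono_ac hac)).aestronglyMeasurable
  set M := max |Real.log c| |Real.log C| with hM
  have hlogint : ∀ i, Integrable (fun x => Real.log (p i x)) ν := by
    intro i
    refine Integrable.mono' (integrable_const M) (hlogm i) ?_
    filter_upwards [hmemK] with x hx
    obtain ⟨h1, h2⟩ := hp_bounds i x hx
    rw [Real.norm_eq_abs, abs_le]
    have hpx : 0 < p i x := lt_of_lt_of_le hc h1
    have hl1 : Real.log c ≤ Real.log (p i x) := Real.log_le_log hc h1
    have hl2 : Real.log (p i x) ≤ Real.log C := Real.log_le_log hpx h2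
    have e1 : -|Real.log c| ≤ Real.log c := neg_abs_le _
    have e2 : Real.log C ≤ |Real.log C| := le_abs_self _
    have e3 : |Real.log c| ≤ M := le_max_left _ _
    have e4 : |Real.log C| ≤ M := le_max_right _ _
    constructor <;> linarith
  have hsum : ∀ lam : Fin k → ℝ, Integrable (fun x => ∑ i, lam i * Real.log (p i x)) ν :=
    fun lam => integrable_finset_sum _ (fun i _ => ((hlogint i).const_mul (lam i)))
  have hA : ConvexOn ℝ (stdSimplex ℝ (Fin k))
      (fun lam => ∫ x, (Real.log (q x) - ∑ i, lam i * Real.log (p i x)) ∂ν) := by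
    by_cases hu : Integrable (fun x => Real.log (q x)) ν
    · have heq : ∀ lam : Fin k → ℝ,
          (∫ x, (Real.log (q x) - ∑ i, lam i * Real.log (p i x)) ∂ν)
            = (∫ x, Real.log (q x) ∂ν) - ∑ i, lam i * ∫ x, Real.log (p i x) ∂ν := by
        intro lam
        rw [integral_sub hu (hsum lam),
          integral_finset_sum _ (fun i _ => ((hlogint i).const_mul (lam i)))]
        simp_rw [integral_const_mul]
      refine ⟨convex_stdSimplex ℝ _, ?_⟩
      intro x hx y hy a b ha hb hab
      refine le_of_eq ?_
      simp only [heq, smul_eq_mul, Pi.add_apply, Pi.smul_apply]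
      rw [show ∑ i, (a * x i + b * y i) * ∫ z, Real.log (p i z) ∂ν
          = a * ∑ i, x i * ∫ z, Real.log (p i z) ∂ν
            + b * ∑ i, y i * ∫ z, Real.log (p i z) ∂ν by
        rw [Finset.mul_sum, Finset.mul_sum, ← Finset.sum_add_distrib]
        exact Finset.sum_congr rfl fun i _ => by ring]
      linear_combination (-(∫ x, Real.log (q x) ∂ν)) * hab
    · have heq : ∀ lam : Fin k → ℝ,
          (∫ x, (Real.log (q x) - ∑ i, lam i * Real.log (p i x)) ∂ν) = 0 := by
        intro lam
        refine integral_undef fun hcon => hu ?_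
        have h2 := hcon.add (hsum lam)
        exact h2.congr (Filter.Eventually.of_forall fun x => by simp)
      simp only [heq]
      exact convexOn_const 0 (convex_stdSimplex ℝ _)
  exact hA.add (aux_logPartition_convexOn K hKm hK.measure_lt_top hKpos p c C hc hp_bounds
    (fun i => (hpint i).1))
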